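/- Let f : ℝⁿ → ℝ be convex and continuous, let W ∈ ℝ^{n×n} and m > 0 satisfy (I − W) ⪰ mI, and let U ∈ ℝ^{n×d}, x ∈ ℝ^d, b ∈ ℝⁿ. Then there exists a unique z⋆ ∈ ℝⁿ satisfying z⋆ = prox_f^1(W z⋆ + U x + b); i.e., the equilibrium point of the monotone operator equilibrium network exists and is unique. -/

import Mathlib

open Matrix Finset

open scoped RealInnerProductSpace

section Aux

open Filter Topology

variable {E : Type*} [NormedAddCommGroup E] [InnerProductSpace ℝ E]

private lemma monDEQ_norm_sub_expand (y z w : E) :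
    ‖y - w‖^2 = ‖y - z‖^2 - 2 * ⟪y - z, w - z⟫ + ‖w - z‖^2 := by
  have h : y - w = (y - z) - (w - z) := by abel
  rw [h, norm_sub_sq_real]

/-- Characterization of minimizers of the prox objective (first-order condition). -/
private lemma monDEQ_prox_char {f : E → ℝ} (hf : ConvexOn ℝ Set.univ f)
    {α : ℝ} (hα : 0 < α) (y z : E) :
    (∀ w, (1/2)*‖y - z‖^2 + α * f z ≤ (1/2)*‖y - w‖^2 + α * f w) ↔
    (∀ w, ⟪y - z, w - z⟫ ≤ α * (f w - f z)) := by
  constructor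
  · intro h w
    set s : ℝ := ⟪y - z, w - z⟫ with hs
    set N : ℝ := ‖w - z‖^2 with hN
    have hN0 : 0 ≤ N := sq_nonneg _
    have key : ∀ t : ℝ, 0 < t → t ≤ 1 → s ≤ t * (N/2) + α * (f w - f z) := by
      intro t ht ht1
      have hz := h (z + t • (w - z))
      have hfz : f (z + t • (w - z)) ≤ (1 - t) * f z + t * f w := by
        have hmem := hf.2 (Set.mem_univ z) (Set.mem_univ w)
          (by linarith : (0:ℝ) ≤ 1 - t) ht.le (by ring)
        have hrw : (1 - t) • z + t • w = z + t • (w - z) := by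
          rw [smul_sub, sub_smul, one_smul]; abel
        rwa [hrw] at hmem
      have hexp : ‖y - (z + t • (w - z))‖^2 = ‖y - z‖^2 - 2 * (t * s) + t^2 * N := by
        rw [monDEQ_norm_sub_expand y z (z + t • (w - z))]
        have h1 : z + t • (w - z) - z = t • (w - z) := by abel
        rw [h1, real_inner_smul_right, norm_smul, mul_pow]
        simp [Real.norm_eq_abs, abs_of_pos ht, hs, hN]
      have hz2 : (1/2)*‖y - z‖^2 + α * f z ≤
          (1/2)*(‖y - z‖^2 - 2 * (t * s) + t^2 * N) + α * ((1 - t) * f z + t * f w) := by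
        calc (1/2)*‖y - z‖^2 + α * f z ≤ (1/2)*‖y - (z + t • (w - z))‖^2
              + α * f (z + t • (w - z)) := hz
          _ ≤ (1/2)*(‖y - z‖^2 - 2 * (t * s) + t^2 * N)
              + α * ((1 - t) * f z + t * f w) := by
            rw [hexp]
            have := mul_le_mul_of_nonneg_left hfz hα.le
            linarith
      have h' : t * s ≤ t * (t * (N/2) + α * (f w - f z)) := by nlinarith
      exact le_of_mul_le_mul_left (by linarith [h']) ht
    refine le_of_forall_pos_le_add ?_
    intro ε hε
    rcases eq_or_lt_of_le hN0 with hNz | hNp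
    · have := key 1 one_pos le_rfl
      rw [← hNz] at this
      simpa using this.trans (by linarith)
    · set t : ℝ := min 1 (ε / (N/2)) with htdef
      have htpos : 0 < t := lt_min one_pos (div_pos hε (by linarith))
      have := key t htpos (min_le_left _ _)
      have htN : t * (N/2) ≤ ε := by
        have h2 : t ≤ ε / (N/2) := min_le_right _ _
        calc t * (N/2) ≤ (ε / (N/2)) * (N/2) :=
              mul_le_mul_of_nonneg_right h2 (by linarith)
          _ = ε := by field_simp
      linarith
  · intro h w
    have h1 := h w
    have h2 := monDEQ_norm_sub_expand y z w
    nlinarith [sq_nonneg ‖w - z‖]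

/-- A convex continuous function on a proper space has an affine-type lower bound. -/
private lemma monDEQ_convex_lower_bound [ProperSpace E] {f : E → ℝ}
    (hf : ConvexOn ℝ Set.univ f) (hfc : Continuous f) (y : E) :
    ∃ M : ℝ, 0 ≤ M ∧ ∀ z, -(M * (1 + ‖z - y‖)) ≤ f z := by
  obtain ⟨x₀, hx₀mem, hx₀⟩ := (isCompact_closedBall y 1).exists_isMinOn
    ⟨y, by simp⟩ hfc.continuousOn
  set A : ℝ := f x₀ with hA
  refine ⟨|f y| + |A|, by positivity, fun z => ?_⟩
  set R : ℝ := ‖z - y‖ with hR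
  have hR0 : 0 ≤ R := norm_nonneg _
  rcases le_or_gt R 1 with hR1 | hR1
  · have hz : z ∈ Metric.closedBall y 1 := by
      simpa [Metric.mem_closedBall, dist_eq_norm] using hR1
    have h1 : A ≤ f z := hx₀ hz
    have h2 : -|A| ≤ A := neg_abs_le _
    nlinarith [abs_nonneg (f y), abs_nonneg A]
  · have hRpos : (0:ℝ) < R := lt_trans one_pos hR1
    have hRne : R ≠ 0 := ne_of_gt hRpos
    set u : E := y + R⁻¹ • (z - y) with hu
    have hucoef : u = (1 - R⁻¹) • y + R⁻¹ • z := by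
      rw [hu, smul_sub, sub_smul, one_smul]; abel
    have hiRpos : 0 < R⁻¹ := inv_pos.mpr hRpos
    have hiRle : R⁻¹ ≤ 1 := by
      rw [inv_le_one_iff₀]; right; linarith
    have hfu : f u ≤ (1 - R⁻¹) * f y + R⁻¹ * f z := by
      rw [hucoef]
      exact hf.2 (Set.mem_univ y) (Set.mem_univ z) (by linarith) hiRpos.le (by ring)
    have humem : u ∈ Metric.closedBall y 1 := by
      have : ‖u - y‖ = 1 := by
        rw [hu]
        simp only [add_sub_cancel_left, norm_smul, Real.norm_eq_abs,
          abs_of_pos hiRpos, ← hR]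
        field_simp
      simp [Metric.mem_closedBall, dist_eq_norm, this]
    have hAu : A ≤ f u := hx₀ humem
    -- multiply A ≤ (1 - R⁻¹) f y + R⁻¹ f z by R
    have hmul : R * A ≤ R * ((1 - R⁻¹) * f y + R⁻¹ * f z) :=
      mul_le_mul_of_nonneg_left (hAu.trans hfu) hRpos.le
    have hexp : R * ((1 - R⁻¹) * f y + R⁻¹ * f z) = R * f y - f y + f z := by
      field_simp
    rw [hexp] at hmul
    have h2 : -|A| ≤ A := neg_abs_le _
    have h3 : -|f y| ≤ f y := neg_abs_le _
    have h4 : f y ≤ |f y| := le_abs_self _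
    nlinarith [mul_le_mul_of_nonneg_left h2 hRpos.le,
      mul_le_mul_of_nonneg_left h3 hRpos.le,
      mul_le_mul_of_nonneg_left h4 hRpos.le, abs_nonneg A, abs_nonneg (f y)]

/-- Existence and uniqueness of the prox point, in first-order-condition form. -/
private lemma monDEQ_prox_exists_unique [ProperSpace E] [CompleteSpace E] {f : E → ℝ}
    (hf : ConvexOn ℝ Set.univ f) (hfc : Continuous f) {α : ℝ} (hα : 0 < α) (y : E) :
    ∃! z : E, ∀ w, ⟪y - z, w - z⟫ ≤ α * (f w - f z) := by
  obtain ⟨M, hM0, hM⟩ := monDEQ_convex_lower_bound hf hfc y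
  set g : E → ℝ := fun z => (1/2)*‖y - z‖^2 + α * f z with hg
  have hgc : Continuous g := by
    apply Continuous.add
    · exact continuous_const.mul ((continuous_const.sub continuous_id).norm.pow 2)
    · exact continuous_const.mul hfc
  have hglb : ∀ z, (1/2)*‖z - y‖^2 - (α*M)*(1 + ‖z - y‖) ≤ g z := by
    intro z
    have h1 := hM z
    have h2 : α * (-(M * (1 + ‖z - y‖))) ≤ α * f z :=
      mul_le_mul_of_nonneg_left h1 hα.le
    have h3 : ‖y - z‖ = ‖z - y‖ := norm_sub_rev _ _
    rw [hg]; simp only []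
    rw [h3]; nlinarith
  set a : ℝ := α * M with ha
  set φ : ℝ → ℝ := fun r => (1/2)*r^2 - a*(1 + r) with hφ
  have hφtop : Tendsto φ atTop atTop := by
    have hcmp : Tendsto (fun s : ℝ => (1/2)*s^2 + (-a - a^2/2)) atTop atTop := by
      apply Filter.tendsto_atTop_add_const_right
      exact (tendsto_pow_atTop two_ne_zero).const_mul_atTop (by norm_num)
    have heq : φ = (fun s : ℝ => (1/2)*s^2 + (-a - a^2/2)) ∘ (fun r => r - a) := by
      funext r; simp only [Function.comp, hφ]; ring
    rw [heq]
    exact hcmp.comp (tendsto_atTop_add_const_right atTop (-a) tendsto_id)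
  have hdist : Tendsto (fun z : E => ‖z - y‖) (cocompact E) atTop := by
    apply tendsto_atTop_mono (fun z => norm_sub_norm_le z y)
    exact tendsto_atTop_add_const_right _ (-‖y‖) tendsto_norm_cocompact_atTop
  have hgtop : Tendsto g (cocompact E) atTop :=
    tendsto_atTop_mono hglb (hφtop.comp hdist)
  obtain ⟨z, hz⟩ := hgc.exists_forall_le hgtop
  have hzchar : ∀ w, ⟪y - z, w - z⟫ ≤ α * (f w - f z) :=
    (monDEQ_prox_char hf hα y z).mp hz
  refine ⟨z, hzchar, fun w hw => ?_⟩
  have h1 := hzchar w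
  have h2 := hw z
  have hsum : ⟪y - z, w - z⟫ + ⟪y - w, z - w⟫ ≤ 0 := by linarith
  have hinner : ⟪y - w, z - w⟫ = ⟪w - y, w - z⟫ := by
    rw [← inner_neg_neg]; congr 1 <;> abel
  rw [hinner] at hsum
  have hcomb : ⟪(y - z) + (w - y), w - z⟫ ≤ 0 := by
    rw [inner_add_left]; linarith
  have hwz : (y - z) + (w - y) = w - z := by abel
  rw [hwz, real_inner_self_eq_norm_sq] at hcomb
  have : ‖w - z‖ = 0 := by nlinarith [norm_nonneg (w - z)]
  have := norm_eq_zero.mp this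
  exact sub_eq_zero.mp this


set_option maxHeartbeats 1000000 in
/-- Core existence/uniqueness: for `A` strongly monotone and bounded, the inclusion
`0 ∈ A z - c + ∂f(z)` (in first-order-condition form) has a unique solution. -/
private lemma monDEQ_core {E : Type*} [NormedAddCommGroup E] [InnerProductSpace ℝ E]
    [ProperSpace E] [CompleteSpace E] {f : E → ℝ}
    (hf : ConvexOn ℝ Set.univ f) (hfc : Continuous f)
    (A : E →ₗ[ℝ] E) {m L : ℝ} (hm : 0 < m)
    (hmono : ∀ v : E, m * ‖v‖^2 ≤ ⟪v, A v⟫)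
    (hL : ∀ v : E, ‖A v‖ ≤ L * ‖v‖) (c : E) :
    ∃! z : E, ∀ w : E, ⟪c - A z, w - z⟫ ≤ f w - f z := by
  set D : ℝ := max (L^2) (m^2) with hD
  have hDpos : 0 < D := lt_max_of_lt_right (pow_pos hm 2)
  have hLD : L^2 ≤ D := le_max_left _ _
  have hmD : m^2 ≤ D := le_max_right _ _
  set α : ℝ := m / D with hα
  have hαpos : 0 < α := div_pos hm hDpos
  have hkk0 : 0 ≤ 1 - m^2/D := by
    have : m^2/D ≤ 1 := (div_le_one hDpos).mpr hmD
    linarith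
  -- contraction bound for the forward step
  have hcontr : ∀ v : E, ‖v - α • A v‖^2 ≤ (1 - m^2/D) * ‖v‖^2 := by
    intro v
    have hexp : ‖v - α • A v‖^2 = ‖v‖^2 - 2*(α*⟪v, A v⟫) + α^2*‖A v‖^2 := by
      rw [norm_sub_sq_real, real_inner_smul_right, norm_smul, mul_pow,
        Real.norm_eq_abs, abs_of_pos hαpos]
    have h1 := hmono v
    have h2 := hL v
    have h2' : ‖A v‖^2 ≤ L^2 * ‖v‖^2 := by
      have := mul_self_le_mul_self (norm_nonneg (A v)) h2
      nlinarith
    have hval : α * m = m^2/D := by rw [hα]; field_simp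
    have hval2 : α^2*D = m^2/D := by rw [hα]; field_simp
    rw [hexp]
    have e1 : -(2*(α*⟪v, A v⟫)) ≤ -(2*(α*(m*‖v‖^2))) := by nlinarith
    have e2 : α^2*‖A v‖^2 ≤ α^2*(L^2*‖v‖^2) := by nlinarith [sq_nonneg α]
    have e3 : α^2*(L^2*‖v‖^2) ≤ α^2*(D*‖v‖^2) :=
      mul_le_mul_of_nonneg_left (mul_le_mul_of_nonneg_right hLD (sq_nonneg ‖v‖))
        (sq_nonneg α)
    have hval' : α*(m*‖v‖^2) = (m^2/D)*‖v‖^2 := by rw [← mul_assoc, hval]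
    have hval2' : α^2*(D*‖v‖^2) = (m^2/D)*‖v‖^2 := by rw [← mul_assoc, hval2]
    nlinarith [e1, e2, e3, hval', hval2']
  -- the prox map
  choose P hP using fun y : E => monDEQ_prox_exists_unique hf hfc hαpos y
  have hPchar : ∀ y w : E, ⟪y - P y, w - P y⟫ ≤ α * (f w - f (P y)) := fun y => (hP y).1
  have hPuniq : ∀ y z : E, (∀ w, ⟪y - z, w - z⟫ ≤ α * (f w - f z)) → z = P y :=
    fun y => (hP y).2
  -- nonexpansiveness of P
  have hPnonexp : ∀ y₁ y₂ : E, ‖P y₁ - P y₂‖ ≤ ‖y₁ - y₂‖ := by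
    intro y₁ y₂
    have h1 := hPchar y₁ (P y₂)
    have h2 := hPchar y₂ (P y₁)
    have h1' : ⟪y₁ - P y₁, P y₂ - P y₁⟫ = -⟪y₁ - P y₁, P y₁ - P y₂⟫ := by
      rw [← inner_neg_right]; congr 1; abel
    have h3 : ⟪(y₂ - P y₂) - (y₁ - P y₁), P y₁ - P y₂⟫ ≤ 0 := by
      rw [inner_sub_left]
      linarith [h1, h2, h1'.symm.le, h1'.le]
    have h4 : (y₂ - P y₂) - (y₁ - P y₁) = (P y₁ - P y₂) - (y₁ - y₂) := by abel
    rw [h4, inner_sub_left, real_inner_self_eq_norm_sq] at h3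
    have h5 : ⟪y₁ - y₂, P y₁ - P y₂⟫ ≤ ‖y₁ - y₂‖ * ‖P y₁ - P y₂‖ :=
      real_inner_le_norm _ _
    nlinarith [norm_nonneg (P y₁ - P y₂), norm_nonneg (y₁ - y₂),
      sq_nonneg (‖P y₁ - P y₂‖ - ‖y₁ - y₂‖)]
  -- the iteration map
  set T : E → E := fun v => P (v - α • (A v - c)) with hT
  set k : ℝ := Real.sqrt (1 - m^2/D) with hkdef
  have hk0 : 0 ≤ k := Real.sqrt_nonneg _
  have hklt1 : k < 1 := by
    rw [hkdef, Real.sqrt_lt' one_pos]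
    have : 0 < m^2/D := div_pos (pow_pos hm 2) hDpos
    nlinarith
  have hTlip : ∀ v₁ v₂ : E, ‖T v₁ - T v₂‖ ≤ k * ‖v₁ - v₂‖ := by
    intro v₁ v₂
    have harg : (v₁ - α • (A v₁ - c)) - (v₂ - α • (A v₂ - c))
        = (v₁ - v₂) - α • A (v₁ - v₂) := by
      rw [map_sub]; module
    have hstep1 : ‖T v₁ - T v₂‖ ≤ ‖(v₁ - v₂) - α • A (v₁ - v₂)‖ := by
      rw [hT]
      calc ‖P (v₁ - α • (A v₁ - c)) - P (v₂ - α • (A v₂ - c))‖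
          ≤ ‖(v₁ - α • (A v₁ - c)) - (v₂ - α • (A v₂ - c))‖ := hPnonexp _ _
        _ = ‖(v₁ - v₂) - α • A (v₁ - v₂)‖ := by rw [harg]
    have hfin : ‖(v₁ - v₂) - α • A (v₁ - v₂)‖ ≤ k * ‖v₁ - v₂‖ := by
      calc ‖(v₁ - v₂) - α • A (v₁ - v₂)‖
          = Real.sqrt (‖(v₁ - v₂) - α • A (v₁ - v₂)‖^2) :=
            (Real.sqrt_sq (norm_nonneg _)).symm
        _ ≤ Real.sqrt ((1 - m^2/D) * ‖v₁ - v₂‖^2) :=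
            Real.sqrt_le_sqrt (hcontr (v₁ - v₂))
        _ = k * ‖v₁ - v₂‖ := by
            rw [Real.sqrt_mul hkk0, Real.sqrt_sq (norm_nonneg _), hkdef]
    exact hstep1.trans hfin
  -- Banach fixed point
  set K : NNReal := ⟨k, hk0⟩ with hK
  have hcon : ContractingWith K T := by
    constructor
    · exact_mod_cast hklt1
    · apply LipschitzWith.of_dist_le_mul
      intro v₁ v₂
      rw [dist_eq_norm, dist_eq_norm]
      exact hTlip v₁ v₂
  have hne : Nonempty E := ⟨0⟩
  have hcomp : CompleteSpace E := inferInstance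
  set zf : E := ContractingWith.fixedPoint T hcon with hzf
  have hzfix : T zf = zf := ContractingWith.fixedPoint_isFixedPt hcon
  -- the fixed points of T are exactly the solutions
  have hchar_iff : ∀ z : E, (∀ w : E, ⟪c - A z, w - z⟫ ≤ f w - f z) ↔ T z = z := by
    intro z
    have hyeq : (z - α • (A z - c)) - z = α • (c - A z) := by module
    constructor
    · intro h
      have hchar : ∀ w : E, ⟪(z - α • (A z - c)) - z, w - z⟫ ≤ α * (f w - f z) := by
        intro w
        rw [hyeq, real_inner_smul_left]
        nlinarith [h w]
      have := hPuniq _ z hchar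
      rw [hT]
      exact this.symm
    · intro h w
      have hchar := hPchar (z - α • (A z - c))
      rw [show P (z - α • (A z - c)) = z from h] at hchar
      have h2 := hchar w
      rw [hyeq, real_inner_smul_left] at h2
      exact (mul_le_mul_iff_right₀ hαpos).mp h2
  refine ⟨zf, (hchar_iff zf).mpr hzfix, fun z' hz' => ?_⟩
  exact ContractingWith.fixedPoint_unique' hcon ((hchar_iff z').mp hz') hzfix

end Aux

set_option maxHeartbeats 2000000 in
/-- **Existence and uniqueness of the monDEQ equilibrium.**
For convex continuous `f` and `I - W ⪰ mI` with `m > 0`, there exists a unique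
`z⋆` with `z⋆ = prox_f^1(W z⋆ + U x + b)`, i.e. a unique `z⋆` that minimizes
`z ↦ (1/2)‖(W z⋆ + U x + b) - z‖² + f z`. -/
theorem monDEQ_unique_equilibrium (n d : ℕ) (f : (Fin n → ℝ) → ℝ)
    (hf : ConvexOn ℝ Set.univ f) (hfc : Continuous f)
    (W : Matrix (Fin n) (Fin n) ℝ) (m : ℝ) (hm : 0 < m)
    (hmono : ((1/2 : ℝ) • ((1 - W) + (1 - W)ᵀ) -
        m • (1 : Matrix (Fin n) (Fin n) ℝ)).PosSemidef)
    (U : Matrix (Fin n) (Fin d) ℝ) (x : Fin d → ℝ) (b : Fin n → ℝ) :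
    ∃! zs : Fin n → ℝ, ∀ z : Fin n → ℝ,
      (1/2) * ∑ i, ((W.mulVec zs + U.mulVec x + b) i - zs i)^2 + f zs ≤
        (1/2) * ∑ i, ((W.mulVec zs + U.mulVec x + b) i - z i)^2 + f z := by
  rcases Nat.eq_zero_or_pos n with rfl | hn
  · refine ⟨fun i => 0, fun z => ?_, fun z' _ => funext fun i => i.elim0⟩
    have hz : z = fun i => 0 := funext fun i => i.elim0
    rw [hz]
  · -- main case
    set c : Fin n → ℝ := U.mulVec x + b with hc
    set B : Matrix (Fin n) (Fin n) ℝ := 1 - W with hBdef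
    -- strong monotonicity of B
    have hB : ∀ v : Fin n → ℝ, m * (v ⬝ᵥ v) ≤ v ⬝ᵥ B.mulVec v := by
      intro v
      have h0 := hmono.dotProduct_mulVec_nonneg v
      rw [star_trivial] at h0
      have ht : v ⬝ᵥ (Bᵀ *ᵥ v) = v ⬝ᵥ (B *ᵥ v) := by
        rw [dotProduct_mulVec, vecMul_transpose, dotProduct_comm]
      have hexpand : v ⬝ᵥ (((1/2 : ℝ) • (B + Bᵀ) - m • (1 : Matrix (Fin n) (Fin n) ℝ)) *ᵥ v)
          = v ⬝ᵥ (B *ᵥ v) - m * (v ⬝ᵥ v) := by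
        rw [sub_mulVec, dotProduct_sub, smul_mulVec, add_mulVec, dotProduct_smul,
          dotProduct_add, ht, smul_mulVec, one_mulVec, dotProduct_smul,
          smul_eq_mul, smul_eq_mul]
        ring
      rw [hexpand] at h0
      linarith
    -- Frobenius norm bound
    set Fr : ℝ := ∑ i, ∑ j, (B i j)^2 with hFrdef
    have hFr0 : 0 ≤ Fr := Finset.sum_nonneg fun i _ =>
      Finset.sum_nonneg fun j _ => sq_nonneg _
    have hBv : ∀ v : Fin n → ℝ, (B *ᵥ v) ⬝ᵥ (B *ᵥ v) ≤ Fr * (v ⬝ᵥ v) := by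
      intro v
      have h1 : ∀ i, (B.mulVec v i)^2 ≤ (∑ j, (B i j)^2) * (∑ j, (v j)^2) := by
        intro i
        have h2 := Finset.sum_mul_sq_le_sq_mul_sq Finset.univ (fun j => B i j) v
        simpa [Matrix.mulVec, dotProduct] using h2
      have hvv : v ⬝ᵥ v = ∑ j, (v j)^2 := by
        simp [dotProduct, pow_two]
      calc (B *ᵥ v) ⬝ᵥ (B *ᵥ v) = ∑ i, (B.mulVec v i)^2 := by
            simp [dotProduct, pow_two]
        _ ≤ ∑ i, (∑ j, (B i j)^2) * (∑ j, (v j)^2) :=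
            Finset.sum_le_sum fun i _ => h1 i
        _ = Fr * (v ⬝ᵥ v) := by rw [← Finset.sum_mul, hvv]
    -- pass to the Euclidean space
    have hnormsq : ∀ u : EuclideanSpace ℝ (Fin n), ‖u‖^2 = u ⬝ᵥ u := by
      intro u
      rw [← real_inner_self_eq_norm_sq]
      rfl
    have hf' : ConvexOn ℝ (Set.univ : Set (EuclideanSpace ℝ (Fin n))) (fun v => f v) :=
      ⟨convex_univ, fun a _ b _ p q hp hq hpq => hf.2 trivial trivial hp hq hpq⟩
    have hfc' : Continuous (fun v : EuclideanSpace ℝ (Fin n) => f v) :=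
      hfc.comp (PiLp.continuous_ofLp 2 (fun _ : Fin n => ℝ))
    set A : EuclideanSpace ℝ (Fin n) →ₗ[ℝ] EuclideanSpace ℝ (Fin n) :=
      Matrix.toEuclideanLin B with hA
    have hAapp : ∀ v : EuclideanSpace ℝ (Fin n), A v = (B.mulVec v : Fin n → ℝ) := by
      intro v; rfl
    have hinner : ∀ u v : EuclideanSpace ℝ (Fin n), ⟪u, v⟫ = u ⬝ᵥ v := by
      intro u v; rw [EuclideanSpace.inner_eq_star_dotProduct, star_trivial, dotProduct_comm]
    have hmono' : ∀ v : EuclideanSpace ℝ (Fin n), m * ‖v‖^2 ≤ ⟪v, A v⟫ := by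
      intro v
      rw [hnormsq, hinner, hAapp]
      exact hB v
    have hL' : ∀ v : EuclideanSpace ℝ (Fin n), ‖A v‖ ≤ Real.sqrt Fr * ‖v‖ := by
      intro v
      have h1 : ‖A v‖^2 ≤ Fr * ‖v‖^2 := by
        rw [hnormsq, hnormsq, hAapp]
        exact hBv v
      calc ‖A v‖ = Real.sqrt (‖A v‖^2) := (Real.sqrt_sq (norm_nonneg _)).symm
        _ ≤ Real.sqrt (Fr * ‖v‖^2) := Real.sqrt_le_sqrt h1
        _ = Real.sqrt Fr * ‖v‖ := by
            rw [Real.sqrt_mul hFr0, Real.sqrt_sq (norm_nonneg _)]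
    set eE : (Fin n → ℝ) ≃ EuclideanSpace ℝ (Fin n) :=
      (WithLp.equiv 2 (Fin n → ℝ)).symm with heE
    set cE : EuclideanSpace ℝ (Fin n) := eE c with hcE
    obtain ⟨zf, hzf, hzuniq⟩ := monDEQ_core hf' hfc' A hm hmono' hL' cE
    -- translate the first-order condition to the statement
    have hsum : ∀ u v : Fin n → ℝ, ∑ i, (u i - v i)^2 = ‖eE (u - v)‖^2 := by
      intro u v
      rw [hnormsq]
      refine Finset.sum_congr rfl fun i _ => ?_
      show (u i - v i)^2 = (u i - v i) * (u i - v i)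
      rw [pow_two]
    have hAc : ∀ u : Fin n → ℝ,
        cE - A (eE u) = eE (W.mulVec u + U.mulVec x + b) - eE u := by
      intro u
      have h1 : A (eE u) = eE (B.mulVec u) := rfl
      have h2 : cE - eE (B.mulVec u) = eE (c - B.mulVec u) := rfl
      have h3 : eE (W.mulVec u + U.mulVec x + b) - eE u
          = eE ((W.mulVec u + U.mulVec x + b) - u) := rfl
      rw [h1, h2, h3]
      congr 1
      rw [hBdef, sub_mulVec, one_mulVec, hc]
      abel
    have hstmt_iff : ∀ zs : Fin n → ℝ,
        (∀ z : Fin n → ℝ,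
          (1/2) * ∑ i, ((W.mulVec zs + U.mulVec x + b) i - zs i)^2 + f zs ≤
            (1/2) * ∑ i, ((W.mulVec zs + U.mulVec x + b) i - z i)^2 + f z) ↔
        (∀ w : Fin n → ℝ,
          ⟪cE - A (eE zs), eE w - eE zs⟫ ≤ f (eE w) - f (eE zs)) := by
      intro zs
      set y : Fin n → ℝ := W.mulVec zs + U.mulVec x + b with hy
      have hAce := hAc zs
      have hiff := monDEQ_prox_char hf' one_pos (eE y) (eE zs)
      have e1 : eE (y - zs) = eE y - eE zs := rfl
      have e3 : f (eE zs) = f zs := rfl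
      constructor
      · intro h w
        have hminE : ∀ w : EuclideanSpace ℝ (Fin n),
            (1/2)*‖eE y - eE zs‖^2 + 1 * f (eE zs) ≤ (1/2)*‖eE y - w‖^2 + 1 * f w := by
          intro w
          obtain ⟨w', rfl⟩ := eE.surjective w
          have h' := h w'
          rw [hsum y zs, hsum y w'] at h'
          have e2 : eE (y - w') = eE y - eE w' := rfl
          rw [e1, e2] at h'
          have e4 : f (eE w') = f w' := rfl
          rw [e3, e4]
          linarith
        have h5 := hiff.mp hminE (eE w)
        rw [hAce]
        linarith
      · intro h z
        have hcharE : ∀ w : EuclideanSpace ℝ (Fin n),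
            ⟪eE y - eE zs, w - eE zs⟫ ≤ 1 * (f w - f (eE zs)) := by
          intro w
          obtain ⟨w', rfl⟩ := eE.surjective w
          have h' := h w'
          rw [hAce] at h'
          linarith
        have h2 := hiff.mpr hcharE (eE z)
        rw [hsum y zs, hsum y z]
        have e2 : eE (y - z) = eE y - eE z := rfl
        rw [e1, e2]
        have e4 : f (eE z) = f z := rfl
        linarith [h2, e3.le, e3.ge, e4.le, e4.ge]
    have hze : eE (eE.symm zf) = zf := eE.apply_symm_apply zf
    refine ⟨eE.symm zf, ?_, ?_⟩
    · apply (hstmt_iff (eE.symm zf)).mpr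
      intro w
      rw [hze]
      exact hzf (eE w)
    · intro z' hz'
      have hc' := (hstmt_iff z').mp hz'
      have hcharz : ∀ w : EuclideanSpace ℝ (Fin n),
          ⟪cE - A (eE z'), w - eE z'⟫ ≤ f w - f (eE z') := by
        intro w
        obtain ⟨w', rfl⟩ := eE.surjective w
        exact hc' w'
      have hzz := hzuniq (eE z') hcharz
      rw [← hzz]
      exact (eE.symm_apply_apply z').symm
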